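/- There is no binary systematic code of length n = d + k - 1, dimension k ≥ 2, and minimum distance d = 4. Equivalently, every binary systematic code with k ≥ 2 and d = 4 satisfies n ≥ d + k. -/

import Mathlib

open Finset

/-- `C` has minimum (Hamming) distance exactly `d`. -/
def minDistIs {n : ℕ} {A : Type*} [DecidableEq A] (C : Finset (Fin n → A)) (d : ℕ) : Prop :=
  (∀ x ∈ C, ∀ y ∈ C, x ≠ y → d ≤ hammingDist x y) ∧
    ∃ x ∈ C, ∃ y ∈ C, x ≠ y ∧ hammingDist x y = d

/-- `C` is systematic: projection onto the first `k` coordinates is a bijection onto `A^k`. -/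
def systematicOn {n k : ℕ} {A : Type*} (h : k ≤ n) (C : Finset (Fin n → A)) : Prop :=
  Set.BijOn (fun c (i : Fin k) => c (Fin.castLE h i)) (C : Set (Fin n → A)) Set.univ

/-- The Griesmer sum `∑_{j=0}^{k-1} ⌈d / q^j⌉`. -/
def griesmerSum (q d k : ℕ) : ℤ := ∑ j ∈ Finset.range k, ⌈(d : ℚ) / (q : ℚ) ^ j⌉

private lemma fin2_trans_ne {a b c : Fin 2} (h1 : a ≠ b) (h2 : b ≠ c) : a = c := by
  revert h1 h2; revert a b c; decide

/-- If two words are at distance ≥ 4, their only head disagreement is at `z`, and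
`n ≤ k + 3`, then they disagree at every tail position. -/
private lemma tail_ne {n k : ℕ} (hn : n ≤ k + 3) (x y : Fin n → Fin 2) (z : Fin n)
    (hd : 4 ≤ hammingDist x y)
    (hhead : ∀ i : Fin n, (i : ℕ) < k → x i ≠ y i → i = z) :
    ∀ i : Fin n, k ≤ (i : ℕ) → x i ≠ y i := by
  by_contra h
  push_neg at h
  obtain ⟨i0, hi0k, hi0⟩ := h
  have hkn' : k < n := lt_of_le_of_lt hi0k i0.isLt
  set a : Fin n := ⟨k, hkn'⟩ with ha
  have hsub : ({i | x i ≠ y i} : Finset (Fin n)) ⊆ insert z (Ici a \ {i0}) := by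
    intro i hi
    simp only [mem_filter, mem_univ, true_and] at hi
    rcases lt_or_ge (i : ℕ) k with hik | hik
    · exact mem_insert.2 (Or.inl (hhead i hik hi))
    · refine mem_insert.2 (Or.inr ?_)
      rw [mem_sdiff, mem_Ici]
      refine ⟨?_, ?_⟩
      · exact Fin.le_def.2 hik
      · simp only [mem_singleton]
        rintro rfl
        exact hi hi0
  have hcard : hammingDist x y ≤ (insert z (Ici a \ {i0})).card := by
    exact Finset.card_le_card hsub
  have h1 : (Ici a \ {i0}).card = n - k - 1 := by
    rw [Finset.card_sdiff_of_subset (show ({i0} : Finset (Fin n)) ⊆ Ici a by rw [Finset.singleton_subset_iff, Finset.mem_Ici, Fin.le_def]; exact hi0k)]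
    simp [Fin.card_Ici, ha]
  have h2 : (insert z (Ici a \ {i0})).card ≤ n - k := by
    calc (insert z (Ici a \ {i0})).card ≤ (Ici a \ {i0}).card + 1 := card_insert_le _ _
    _ ≤ n - k := by omega
  omega

theorem stmt6 {n k : ℕ}
    (C : Finset (Fin n → Fin 2)) (hk : 2 ≤ k) (hkn : k ≤ n)
    (hcard : C.card = 2 ^ k)
    (hsys : systematicOn hkn C)
    (hmin : minDistIs C 4) :
    n ≥ 4 + k := by
  by_contra hlt
  push_neg at hlt
  have hn3 : n ≤ k + 3 := by omega
  have h0k : (0 : ℕ) < k := by omega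
  have h1k : (1 : ℕ) < k := by omega
  -- the three messages
  set m0 : Fin k → Fin 2 := fun _ => 0 with hm0
  set m1 : Fin k → Fin 2 := fun i => if (i : ℕ) = 0 then 1 else 0 with hm1
  set m2 : Fin k → Fin 2 := fun i => if (i : ℕ) ≤ 1 then 1 else 0 with hm2
  obtain ⟨c0, hc0, hc0e⟩ := hsys.2.2 (Set.mem_univ m0)
  obtain ⟨c1, hc1, hc1e⟩ := hsys.2.2 (Set.mem_univ m1)
  obtain ⟨c2, hc2, hc2e⟩ := hsys.2.2 (Set.mem_univ m2)
  have e0 : ∀ j : Fin k, c0 (Fin.castLE hkn j) = m0 j := fun j => congrFun hc0e j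
  have e1 : ∀ j : Fin k, c1 (Fin.castLE hkn j) = m1 j := fun j => congrFun hc1e j
  have e2 : ∀ j : Fin k, c2 (Fin.castLE hkn j) = m2 j := fun j => congrFun hc2e j
  -- values at positions i < k
  have v0 : ∀ i : Fin n, (h : (i : ℕ) < k) → c0 i = m0 ⟨i, h⟩ := by
    intro i h
    have : Fin.castLE hkn ⟨(i : ℕ), h⟩ = i := by ext; simp
    exact (congrArg c0 this.symm).trans (e0 ⟨_, h⟩)
  have v1 : ∀ i : Fin n, (h : (i : ℕ) < k) → c1 i = m1 ⟨i, h⟩ := by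
    intro i h
    have : Fin.castLE hkn ⟨(i : ℕ), h⟩ = i := by ext; simp
    exact (congrArg c1 this.symm).trans (e1 ⟨_, h⟩)
  have v2 : ∀ i : Fin n, (h : (i : ℕ) < k) → c2 i = m2 ⟨i, h⟩ := by
    intro i h
    have : Fin.castLE hkn ⟨(i : ℕ), h⟩ = i := by ext; simp
    exact (congrArg c2 this.symm).trans (e2 ⟨_, h⟩)
  set z0 : Fin n := ⟨0, lt_of_lt_of_le h0k hkn⟩ with hz0
  set z1 : Fin n := ⟨1, lt_of_lt_of_le h1k hkn⟩ with hz1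
  -- c0 ≠ c1, c1 ≠ c2, c0 ≠ c2
  have ne01 : c0 ≠ c1 := by
    intro h
    exact absurd (congrFun h z0) (by rw [v0 z0 h0k, v1 z0 h0k]; simp [hm0, hm1, hz0])
  have ne12 : c1 ≠ c2 := by
    intro h
    exact absurd (congrFun h z1) (by rw [v1 z1 h1k, v2 z1 h1k]; simp [hm1, hm2, hz1])
  have ne02 : c0 ≠ c2 := by
    intro h
    exact absurd (congrFun h z0) (by rw [v0 z0 h0k, v2 z0 h0k]; simp [hm0, hm2, hz0])
  have hd01 : 4 ≤ hammingDist c0 c1 := hmin.1 c0 hc0 c1 hc1 ne01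
  have hd12 : 4 ≤ hammingDist c1 c2 := hmin.1 c1 hc1 c2 hc2 ne12
  have hd02 : 4 ≤ hammingDist c0 c2 := hmin.1 c0 hc0 c2 hc2 ne02
  -- head disagreement analysis
  have t01 : ∀ i : Fin n, k ≤ (i : ℕ) → c0 i ≠ c1 i := by
    refine tail_ne hn3 c0 c1 z0 hd01 ?_
    intro i hik hne
    rw [v0 i hik, v1 i hik] at hne
    simp only [hm0, hm1] at hne
    by_contra hiz
    have : (i : ℕ) ≠ 0 := fun h => hiz (by ext; simpa using h)
    simp [this] at hne
  have t12 : ∀ i : Fin n, k ≤ (i : ℕ) → c1 i ≠ c2 i := by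
    refine tail_ne hn3 c1 c2 z1 hd12 ?_
    intro i hik hne
    rw [v1 i hik, v2 i hik] at hne
    simp only [hm1, hm2] at hne
    by_contra hiz
    have hne1 : (i : ℕ) ≠ 1 := fun h => hiz (by ext; simpa using h)
    rcases Nat.lt_or_ge (i : ℕ) 1 with h | h
    · have : (i : ℕ) = 0 := by omega
      simp [this] at hne
    · have h2 : ¬ ((i : ℕ) = 0) := by omega
      have h3 : ¬ ((i : ℕ) ≤ 1) := by omega
      simp [h2, h3] at hne
  -- now c0 and c2 agree on the tail, so hammingDist c0 c2 ≤ 2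
  have hsub : ({i | c0 i ≠ c2 i} : Finset (Fin n)) ⊆ {z0, z1} := by
    intro i hi
    simp only [mem_filter, mem_univ, true_and] at hi
    rcases lt_or_ge (i : ℕ) k with hik | hik
    · rw [v0 i hik, v2 i hik] at hi
      simp only [hm0, hm2] at hi
      have : (i : ℕ) ≤ 1 := by
        by_contra h
        simp [h] at hi
      have : (i : ℕ) = 0 ∨ (i : ℕ) = 1 := by omega
      rcases this with h | h
      · exact mem_insert.2 (Or.inl (by ext; simpa using h))
      · refine mem_insert.2 (Or.inr ?_)
        simp only [mem_singleton]
        ext; simpa using h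
    · exact absurd (fin2_trans_ne (t01 i hik) (t12 i hik)) hi
  have : hammingDist c0 c2 ≤ ({z0, z1} : Finset (Fin n)).card := Finset.card_le_card hsub
  have hle2 : ({z0, z1} : Finset (Fin n)).card ≤ 2 := card_insert_le _ _ |>.trans (by simp)
  omega
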